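/- For fixed q > 1, α ∈ [0,1], and k ≥ 2, the eigenvalues satisfy lim_{n→∞} λ_{k,q}^{(α,n)} = 1. -/

import Mathlib

open Finset Filter Topology

/-- The q-integer `[m]_q = 1 + q + ... + q^{m-1}`, with `[0]_q = 0`. -/
noncomputable def qInt (q : ℝ) (m : ℕ) : ℝ := ∑ i ∈ Finset.range m, q ^ i

/-- The q-factorial `[n]_q! = [1]_q [2]_q ⋯ [n]_q`. -/
noncomputable def qFact (q : ℝ) (n : ℕ) : ℝ := ∏ i ∈ Finset.range n, qInt q (i + 1)

/-- The q-binomial coefficient `[n]_q!/([k]_q! [n-k]_q!)` (zero if `k > n`). -/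
noncomputable def qBinom (q : ℝ) (n k : ℕ) : ℝ :=
  if k ≤ n then qFact q n / (qFact q k * qFact q (n - k)) else 0

/-- The q-Stirling number of the second kind. -/
noncomputable def qStirling (q : ℝ) (k r : ℕ) : ℝ :=
  (1 / (qFact q r * q ^ (r * (r - 1) / 2))) *
    ∑ i ∈ Finset.range (r + 1),
      (-1 : ℝ) ^ i * q ^ (i * (i - 1) / 2) * qBinom q r i * (qInt q (r - i)) ^ k

/-- The q-forward difference operator on sequences:
`Δ_q^0 f_i = f_i`, `Δ_q^{r+1} f_i = Δ_q^r f_{i+1} - q^r Δ_q^r f_i`. -/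
noncomputable def qDiff (q : ℝ) : ℕ → (ℕ → ℝ) → ℕ → ℝ
  | 0, f, i => f i
  | r + 1, f, i => qDiff q r f (i + 1) - q ^ r * qDiff q r f i

/-- The eigenvalues `λ_{k,q}^{(α,n)}` of the (α,q)-Bernstein operator. -/
noncomputable def lamEig (q α : ℝ) (n k : ℕ) : ℝ :=
  q ^ (k * (k - 1) / 2) * qFact q (n - 2) / (qFact q (n - k) * (qInt q n) ^ k) *
    ((1 - α) * qInt q (n - k) * qInt q (n - 1 + k) + α * qInt q n * qInt q (n - 1))

/-- The coefficients `a_{n,q}(r,k)` of `T_{n,q,α}(t^k; x) = Σ_r a_{n,q}(r,k) x^r`. -/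
noncomputable def aCoef (q α : ℝ) (n r k : ℕ) : ℝ :=
  q ^ (r * (r - 1) / 2) * qFact q (n - 2) / ((qInt q n) ^ k * qFact q (n - r)) *
    ((1 - α) * qInt q (n - r) *
        (qInt q (n + r - 1) * qStirling q (k + 1) (r + 1) -
          qInt q (r + 1) * qInt q (n - 1) * qStirling q k (r + 1)) +
      α * qInt q n * qInt q (n - 1) * qStirling q k r)

/-- The (α,q)-Bernstein operator, via its forward-difference representation
`T_{n,q,α}(f;x) = Σ_{r=0}^n ((1-α) C_q(n-1,r) Δ_q^r g_0 + α C_q(n,r) Δ_q^r f_0) x^r`,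
where `f_i = f([i]_q/[n]_q)` and
`g_i = (1 - q^{n-i-1}[i]_q/[n-1]_q) f_i + (q^{n-i-1}[i]_q/[n-1]_q) f_{i+1}`. -/
noncomputable def Talpha (q α : ℝ) (n : ℕ) (f : ℝ → ℝ) (x : ℝ) : ℝ :=
  let fs : ℕ → ℝ := fun i => f (qInt q i / qInt q n)
  let gs : ℕ → ℝ := fun i =>
    (1 - q ^ (n - i - 1) * qInt q i / qInt q (n - 1)) * fs i +
      (q ^ (n - i - 1) * qInt q i / qInt q (n - 1)) * fs (i + 1)
  ∑ r ∈ Finset.range (n + 1),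
    ((1 - α) * qBinom q (n - 1) r * qDiff q r gs 0 + α * qBinom q n r * qDiff q r fs 0) * x ^ r

lemma qInt_pos {q : ℝ} (hq : 1 < q) {m : ℕ} (hm : 0 < m) : 0 < qInt q m :=
  Finset.sum_pos (fun i _ => pow_pos (by linarith) i)
    (by simpa [Finset.nonempty_range_iff] using hm.ne')

lemma qFact_pos {q : ℝ} (hq : 1 < q) (m : ℕ) : 0 < qFact q m :=
  Finset.prod_pos fun i _ => qInt_pos hq (Nat.succ_pos i)

lemma qInt_eq {q : ℝ} (hq : 1 < q) (m : ℕ) : qInt q m = (q ^ m - 1) / (q - 1) :=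
  geom_sum_eq (ne_of_gt hq) m

lemma expid : ∀ k : ℕ, 2 ≤ k → k * (k - 1) / 2 = (∑ j ∈ Finset.range (k - 2), (j + 2)) + 1 := by
  intro k hk
  induction k, hk using Nat.le_induction with
  | base => simp
  | succ n hn ih =>
    obtain ⟨p, rfl⟩ : ∃ p, n = p + 2 := ⟨n - 2, by omega⟩
    have e1 : p + 2 + 1 - 2 = p + 1 := by omega
    have e2 : p + 2 + 1 - 1 = p + 2 := by omega
    have e3 : p + 2 - 1 = p + 1 := by omega
    rw [e1, Finset.sum_range_succ]
    rw [e3, show p + 2 - 2 = p from rfl] at ih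
    have hab : (p + 2 + 1) * (p + 2) = (p + 2) * (p + 1) + 2 * (p + 2) := by ring
    have hev : ∃ c, (p + 2) * (p + 1) = 2 * c := by
      rcases Nat.even_or_odd p with ⟨c, hc⟩ | ⟨c, hc⟩
      · exact ⟨(c + 1) * (2 * c + 1), by subst hc; ring⟩
      · exact ⟨(2 * c + 3) * (c + 1), by subst hc; ring⟩
    obtain ⟨c, hc⟩ := hev
    rw [e2]
    omega

lemma tendsto_base {q : ℝ} (hq : 1 < q) (C : ℝ) :
    Tendsto (fun n : ℕ => (1 - C * (q⁻¹) ^ n) / (1 - (q⁻¹) ^ n)) atTop (nhds 1) := by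
  have hr : Tendsto (fun n : ℕ => (q⁻¹) ^ n) atTop (nhds 0) :=
    tendsto_pow_atTop_nhds_zero_of_lt_one (by positivity) (inv_lt_one_of_one_lt₀ hq)
  have h1 : Tendsto (fun n : ℕ => 1 - C * (q⁻¹) ^ n) atTop (nhds 1) := by
    simpa using tendsto_const_nhds.sub (hr.const_mul C)
  have h2 : Tendsto (fun n : ℕ => 1 - (q⁻¹) ^ n) atTop (nhds 1) := by
    simpa using tendsto_const_nhds.sub hr
  have := h1.div h2 one_ne_zero
  rw [div_one] at this
  exact this

lemma tendsto_aux {q : ℝ} (hq : 1 < q) (a : ℕ) :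
    Tendsto (fun n : ℕ => q ^ a * qInt q (n - a) / qInt q n) atTop (nhds 1) := by
  have hq0 : (0:ℝ) < q := by linarith
  refine Tendsto.congr' ?_ (tendsto_base hq (q ^ a))
  filter_upwards [eventually_ge_atTop (a + 1)] with n hn
  obtain ⟨b, rfl⟩ : ∃ b, n = a + b := ⟨n - a, by omega⟩
  have hb : 1 ≤ b ∨ 1 ≤ a := by omega
  rw [qInt_eq hq, qInt_eq hq, Nat.add_sub_cancel_left]
  have h1 : (q:ℝ) - 1 ≠ 0 := by intro h; linarith [sub_eq_zero.mp h]
  have h2 : (q:ℝ) ^ (a + b) - 1 ≠ 0 := by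
    have : (1:ℝ) < q ^ (a + b) := one_lt_pow₀ hq (by omega)
    linarith
  have h3 : (q:ℝ) ≠ 0 := by positivity
  rw [inv_pow]
  field_simp
  ring

lemma tendsto_aux2 {q : ℝ} (hq : 1 < q) (c : ℕ) :
    Tendsto (fun n : ℕ => qInt q (n + c) / (q ^ c * qInt q n)) atTop (nhds 1) := by
  have hq0 : (0:ℝ) < q := by linarith
  refine Tendsto.congr' ?_ (tendsto_base hq ((q⁻¹) ^ c))
  filter_upwards [eventually_ge_atTop 1] with n hn
  rw [qInt_eq hq, qInt_eq hq]
  have h1 : (q:ℝ) - 1 ≠ 0 := by intro h; linarith [sub_eq_zero.mp h]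
  have h2 : (q:ℝ) ^ n - 1 ≠ 0 := by
    have : (1:ℝ) < q ^ n := one_lt_pow₀ hq (by omega)
    linarith
  have h3 : (q:ℝ) ≠ 0 := by positivity
  rw [pow_add, inv_pow, inv_pow]
  field_simp

lemma lamEig_eq (q α : ℝ) (hq : 1 < q) (m n : ℕ) (hn : m + 3 ≤ n) :
    lamEig q α n (m + 2) =
      (∏ j ∈ Finset.range m, (q ^ (j + 2) * qInt q (n - (j + 2)) / qInt q n)) *
        ((1 - α) * (q ^ (m + 2) * qInt q (n - (m + 2)) / qInt q n) *
            (qInt q (n - 1 + (m + 2)) / (q ^ (m + 1) * qInt q n)) +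
          α * (q * qInt q (n - 1) / qInt q n)) := by
  have hq0 : (0:ℝ) < q := by linarith
  have hNn : qInt q n ≠ 0 := (qInt_pos hq (by omega)).ne'
  have hFnk : qFact q (n - (m + 2)) ≠ 0 := (qFact_pos hq _).ne'
  have h3 : (q:ℝ) ≠ 0 := by positivity
  have hsplit : qFact q (n - 2) =
      qFact q (n - (m + 2)) * ∏ j ∈ Finset.range m, qInt q (n - (j + 2)) := by
    simp only [qFact]
    rw [← Finset.prod_range_mul_prod_Ico _ (show n - (m + 2) ≤ n - 2 by omega)]
    congr 1
    rw [Finset.prod_Ico_eq_prod_range, show n - 2 - (n - (m + 2)) = m by omega,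
      ← Finset.prod_range_reflect]
    refine Finset.prod_congr rfl fun j hj => ?_
    simp only [Finset.mem_range] at hj
    congr 1
    omega
  have hpow : q ^ ((m + 2) * (m + 2 - 1) / 2) = q * q ^ (∑ j ∈ Finset.range m, (j + 2)) := by
    rw [← pow_succ']
    congr 1
    simpa using expid (m + 2) (by omega)
  rw [lamEig, hsplit, hpow]
  simp only [Finset.prod_div_distrib, Finset.prod_mul_distrib,
    Finset.prod_pow_eq_pow_sum, Finset.prod_const, Finset.card_range]
  field_simp
  ring

theorem lamEig_limit_q_gt_one (q α : ℝ) (hq : 1 < q) (hα : α ∈ Set.Icc (0 : ℝ) 1)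
    (k : ℕ) (hk : 2 ≤ k) :
    Filter.Tendsto (fun n : ℕ => lamEig q α n k) Filter.atTop (nhds 1) := by
  obtain ⟨m, rfl⟩ : ∃ m, k = m + 2 := ⟨k - 2, by omega⟩
  have Hprod : Tendsto
      (fun n : ℕ => ∏ j ∈ Finset.range m, (q ^ (j + 2) * qInt q (n - (j + 2)) / qInt q n))
      atTop (nhds 1) := by
    have := tendsto_finset_prod (f := fun j (n : ℕ) => q ^ (j + 2) * qInt q (n - (j + 2)) / qInt q n)
      (a := fun _ => (1:ℝ)) (Finset.range m) (fun j _ => tendsto_aux hq (j + 2))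
    simpa using this
  have hA : Tendsto (fun n : ℕ => q ^ (m + 2) * qInt q (n - (m + 2)) / qInt q n) atTop (nhds 1) :=
    tendsto_aux hq (m + 2)
  have hB : Tendsto (fun n : ℕ => qInt q (n - 1 + (m + 2)) / (q ^ (m + 1) * qInt q n))
      atTop (nhds 1) := by
    refine Tendsto.congr' ?_ (tendsto_aux2 hq (m + 1))
    filter_upwards [eventually_ge_atTop 1] with n hn
    rw [show n + (m + 1) = n - 1 + (m + 2) by omega]
  have hC : Tendsto (fun n : ℕ => q * qInt q (n - 1) / qInt q n) atTop (nhds 1) := by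
    simpa using tendsto_aux hq 1
  have H := Hprod.mul ((((tendsto_const_nhds (x := (1:ℝ) - α)).mul hA).mul hB).add
    ((tendsto_const_nhds (x := α)).mul hC))
  have hval : (1:ℝ) * ((1 - α) * 1 * 1 + α * 1) = 1 := by ring
  rw [hval] at H
  refine Tendsto.congr' ?_ H
  filter_upwards [eventually_ge_atTop (m + 3)] with n hn
  exact (lamEig_eq q α hq m n hn).symm
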